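/- arXiv:1805.08611 — 3 statements merged into one kernel-verified Lean document; each statement's English description precedes it below -/
import Mathlib

section
/- With the same setup (orthogonal complex structure J on inner product space V, subspace W, D = W ∩ J(W), D⊥ the orthogonal complement of D in W, decomposition JZ = φZ + ωZ for Z ∈ W): φ maps D⊥ into D⊥, i.e., for all Z ∈ D⊥ (Z ∈ W with Z ⊥ D), the component φZ = P_W(JZ) is orthogonal to D. -/
open scoped RealInnerProductSpace

/-- `φ = P_W ∘ J` maps `D⊥` (the orthogonal complement of
`D = W ⊓ J(W)` inside `W`) into `D⊥`: if `Z ∈ W` is orthogonal to `D`, then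
`φZ = P_W (JZ)` is orthogonal to `D`. -/
theorem stmt_2 {V : Type*} [NormedAddCommGroup V] [InnerProductSpace ℝ V]
    [FiniteDimensional ℝ V] (J : V →ₗ[ℝ] V)
    (hJ2 : ∀ x : V, J (J x) = -x)
    (hJi : ∀ x y : V, ⟪J x, J y⟫ = ⟪x, y⟫)
    (W : Submodule ℝ V) (Z : V) (hZW : Z ∈ W)
    (hZD : ∀ d ∈ W ⊓ W.map J, ⟪Z, d⟫ = 0) :
    ∀ d ∈ W ⊓ W.map J, ⟪((W.orthogonalProjection (J Z) : W) : V), d⟫ = 0 := by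
  intro d hd
  obtain ⟨hdW, w, hwW, hwd⟩ := hd
  -- projection property: ⟪P_W (JZ), d⟫ = ⟪J Z, d⟫
  have hproj : ⟪((W.orthogonalProjection (J Z) : W) : V), d⟫ = ⟪J Z, d⟫ := by
    have h := Submodule.sub_starProjection_mem_orthogonal (K := W) (J Z)
    have h2 := h d hdW
    have : ⟪J Z, d⟫ - ⟪((W.orthogonalProjection (J Z) : W) : V), d⟫ = 0 := by
      rw [← inner_sub_left, real_inner_comm]; exact h2
    linarith
  rw [hproj]
  -- ⟪J Z, d⟫ = ⟪J(JZ), J d⟫ = -⟪Z, J d⟫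
  have h1 : ⟪J Z, d⟫ = -⟪Z, J d⟫ := by
    have := hJi (J Z) d
    rw [hJ2 Z] at this
    rw [← this, inner_neg_left]
  rw [h1]
  -- J d ∈ W ⊓ W.map J
  have hJd : J d ∈ W ⊓ W.map J := by
    constructor
    · have : J d = -w := by rw [← hwd, hJ2]
      rw [this]; exact neg_mem hwW
    · exact ⟨d, hdW, rfl⟩
  rw [hZD _ hJd, neg_zero]
end

section
/- Let μ be the orthogonal complement of ω(D⊥) inside W⊥, where D⊥ is the orthogonal complement of D = W ∩ J(W) inside W and ωZ = P_{W⊥}(JZ). Then μ is J-invariant: J(μ) ⊆ μ. -/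
open scoped RealInnerProductSpace

/-- Let `μ` be the orthogonal complement of `ω(D⊥)` inside `W⊥`,
where `D⊥` is the orthogonal complement of `D = W ⊓ J(W)` inside `W` and
`ωZ = P_{W⊥}(JZ)`.  Then `μ` is `J`-invariant: `J(μ) ⊆ μ`. -/
theorem stmt_8 {V : Type*} [NormedAddCommGroup V] [InnerProductSpace ℝ V]
    [FiniteDimensional ℝ V] (J : V →ₗ[ℝ] V)
    (hJ2 : ∀ x : V, J (J x) = -x)
    (hJi : ∀ x y : V, ⟪J x, J y⟫ = ⟪x, y⟫)
    (W : Submodule ℝ V) (μ : Submodule ℝ V)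
    (hμ : μ = Wᗮ ⊓ (Submodule.span ℝ
      {v : V | ∃ Z ∈ W, (∀ d ∈ W ⊓ W.map J, ⟪Z, d⟫ = 0) ∧
        v = ((Submodule.orthogonalProjectionOnto Wᗮ (J Z) : Wᗮ) : V)})ᗮ) :
    μ.map J ≤ μ := by
  subst hμ
  rintro v hv
  simp only [Submodule.mem_map] at hv
  obtain ⟨x, ⟨hxW, hxS⟩, rfl⟩ := hv
  have hgen : ∀ Z, Z ∈ W → (∀ d ∈ W ⊓ W.map J, ⟪Z, d⟫ = 0) →
      ⟪((Submodule.orthogonalProjectionOnto Wᗮ (J Z) : Wᗮ) : V), x⟫ = 0 := by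
    intro Z hZ hZd
    exact hxS _ (Submodule.subset_span ⟨Z, hZ, hZd, rfl⟩)
  -- a common computation: ⟪x, J Z⟫ = 0 for Z ∈ W with Z ⊥ D
  have hxJZ : ∀ Z, Z ∈ W → (∀ d ∈ W ⊓ W.map J, ⟪Z, d⟫ = 0) → ⟪x, J Z⟫ = 0 := by
    intro Z hZW hZD
    have hsub : J Z - ((Submodule.orthogonalProjectionOnto Wᗮ (J Z) : Wᗮ) : V) ∈ Wᗮᗮ :=
      Submodule.sub_starProjection_mem_orthogonal (K := Wᗮ) (J Z)
    have h1 : ⟪x, J Z - ((Submodule.orthogonalProjectionOnto Wᗮ (J Z) : Wᗮ) : V)⟫ = 0 := hsub x hxW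
    have h2 : ⟪x, ((Submodule.orthogonalProjectionOnto Wᗮ (J Z) : Wᗮ) : V)⟫ = 0 := by
      rw [real_inner_comm]; exact hgen Z hZW hZD
    have := inner_sub_right (𝕜 := ℝ) x (J Z) (((Submodule.orthogonalProjectionOnto Wᗮ (J Z) : Wᗮ) : V))
    rw [h1] at this
    linarith [this, h2]
  have hJxW : J x ∈ Wᗮ := by
    rw [Submodule.mem_orthogonal]
    intro w hw
    set D := W ⊓ W.map J with hD
    set d : V := ((Submodule.orthogonalProjectionOnto D w : D) : V) with hd
    have hdD : d ∈ D := (Submodule.orthogonalProjectionOnto D w).2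
    have hZW : w - d ∈ W := W.sub_mem hw hdD.1
    have hZD : ∀ u ∈ D, ⟪w - d, u⟫ = 0 := by
      intro u hu
      rw [real_inner_comm]
      exact (Submodule.sub_starProjection_mem_orthogonal (K := D) w) u hu
    have h1 : ⟪d, J x⟫ = 0 := by
      obtain ⟨hdW, w', hw', hw''⟩ := hdD
      have hJd : J d ∈ W := by
        rw [← hw'', hJ2]
        exact W.neg_mem hw'
      have : ⟪J d, J (J x)⟫ = ⟪d, J x⟫ := hJi d (J x)
      rw [hJ2, inner_neg_right] at this
      have hz : ⟪J d, x⟫ = 0 := hxW _ hJd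
      rw [hz] at this
      linarith
    have h2 : ⟪w - d, J x⟫ = 0 := by
      have : ⟪J (w - d), J (J x)⟫ = ⟪w - d, J x⟫ := hJi _ _
      rw [hJ2, inner_neg_right] at this
      have hz : ⟪J (w - d), x⟫ = 0 := by
        rw [real_inner_comm]
        exact hxJZ _ hZW hZD
      rw [hz] at this
      linarith
    have : ⟪d + (w - d), J x⟫ = 0 := by
      rw [inner_add_left, h1, h2]; ring
    simpa using this
  refine ⟨hJxW, ?_⟩
  rw [SetLike.mem_coe, Submodule.mem_orthogonal]
  intro u hu
  induction hu using Submodule.span_induction with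
  | mem v hv =>
    obtain ⟨Z, hZW, hZD, rfl⟩ := hv
    have hsub : J Z - ((Submodule.orthogonalProjectionOnto Wᗮ (J Z) : Wᗮ) : V) ∈ Wᗮᗮ :=
      Submodule.sub_starProjection_mem_orthogonal (K := Wᗮ) (J Z)
    rw [Submodule.orthogonal_orthogonal] at hsub
    have h1 : ⟪J Z - ((Submodule.orthogonalProjectionOnto Wᗮ (J Z) : Wᗮ) : V), J x⟫ = 0 := by
      exact hJxW _ hsub
    have h2 : ⟪J Z, J x⟫ = 0 := by
      rw [hJi]; exact hxW _ hZW
    have := inner_sub_left (𝕜 := ℝ) (J Z) (((Submodule.orthogonalProjectionOnto Wᗮ (J Z) : Wᗮ) : V)) (J x)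
    rw [h1, h2] at this
    linarith
  | zero => simp
  | add a b _ _ ha hb => rw [inner_add_left, ha, hb]; ring
  | smul c a _ ha => rw [inner_smul_left, ha]; simp
end

section
/- For the map φ(u₁,…,u₈) = (e^{u₁} sin u₃, e^{u₁} cos u₃) from ℝ⁸ to ℝ² and the almost complex structure J on ℝ⁸ given by J e₁ = (−e₃−e₂)/√2, J e₂ = (−e₄+e₁)/√2, J e₃ = (e₁+e₄)/√2, J e₄ = (e₂−e₃)/√2, J e₅ = (−e₇−e₆)/√2, J e₆ = (−e₈+e₅)/√2, J e₇ = (e₅+e₈)/√2, J e₈ = (e₆−e₇)/√2: at every point the subspace D := ker dφ ∩ J(ker dφ) equals span{e₅, e₆, e₇, e₈}, which is 4-dimensional and J-invariant. -/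
open scoped RealInnerProductSpace

noncomputable abbrev stmt11.pr (i : Fin 8) : EuclideanSpace ℝ (Fin 8) →L[ℝ] ℝ :=
  EuclideanSpace.proj i

open stmt11 in
theorem stmt11.ker_fderiv_mem (φ : EuclideanSpace ℝ (Fin 8) → EuclideanSpace ℝ (Fin 2))
    (hφ : ∀ p, φ p = (WithLp.equiv 2 (Fin 2 → ℝ)).symm
      ![Real.exp (p 0) * Real.sin (p 2), Real.exp (p 0) * Real.cos (p 2)])
    (p : EuclideanSpace ℝ (Fin 8)) (v : EuclideanSpace ℝ (Fin 8)) :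
    v ∈ LinearMap.ker (fderiv ℝ φ p : EuclideanSpace ℝ (Fin 8) →ₗ[ℝ] EuclideanSpace ℝ (Fin 2)) ↔ v 0 = 0 ∧ v 2 = 0 := by
  set E := Real.exp (p 0) with hE
  set s := Real.sin (p 2) with hs
  set c := Real.cos (p 2) with hc
  have hp0 : HasFDerivAt (fun q : EuclideanSpace ℝ (Fin 8) => q 0) (pr 0) p := (pr 0).hasFDerivAt
  have hp2 : HasFDerivAt (fun q : EuclideanSpace ℝ (Fin 8) => q 2) (pr 2) p := (pr 2).hasFDerivAt
  have hexp : HasFDerivAt (fun q : EuclideanSpace ℝ (Fin 8) => Real.exp (q 0)) (E • pr 0) p :=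
    by have := (Real.hasDerivAt_exp (p 0)).comp_hasFDerivAt p hp0; exact this
  have hsin : HasFDerivAt (fun q : EuclideanSpace ℝ (Fin 8) => Real.sin (q 2)) (c • pr 2) p :=
    by have := (Real.hasDerivAt_sin (p 2)).comp_hasFDerivAt p hp2; exact this
  have hcos : HasFDerivAt (fun q : EuclideanSpace ℝ (Fin 8) => Real.cos (q 2)) ((-s) • pr 2) p :=
    by have := (Real.hasDerivAt_cos (p 2)).comp_hasFDerivAt p hp2; exact this
  have h0 : HasFDerivAt (fun q : EuclideanSpace ℝ (Fin 8) => Real.exp (q 0) * Real.sin (q 2))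
      (E • (c • pr 2) + s • (E • pr 0)) p := hexp.mul hsin
  have h1 : HasFDerivAt (fun q : EuclideanSpace ℝ (Fin 8) => Real.exp (q 0) * Real.cos (q 2))
      (E • ((-s) • pr 2) + c • (E • pr 0)) p := hexp.mul hcos
  set L0 : EuclideanSpace ℝ (Fin 8) →L[ℝ] ℝ := E • (c • pr 2) + s • (E • pr 0) with hL0
  set L1 : EuclideanSpace ℝ (Fin 8) →L[ℝ] ℝ := E • ((-s) • pr 2) + c • (E • pr 0) with hL1
  set e : (Fin 2 → ℝ) ≃L[ℝ] EuclideanSpace ℝ (Fin 2) :=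
    (EuclideanSpace.equiv (Fin 2) ℝ).symm with he
  set Lpi : EuclideanSpace ℝ (Fin 8) →L[ℝ] (Fin 2 → ℝ) := ContinuousLinearMap.pi ![L0, L1] with hLpi
  have hg : HasFDerivAt (fun q : EuclideanSpace ℝ (Fin 8) =>
      (![Real.exp (q 0) * Real.sin (q 2), Real.exp (q 0) * Real.cos (q 2)] : Fin 2 → ℝ))
      Lpi p := by
    rw [hLpi]
    apply hasFDerivAt_pi'.2
    intro i
    fin_cases i
    · exact h0
    · exact h1
  have hφ2 : HasFDerivAt φ ((e.toContinuousLinearMap).comp Lpi) p := by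
    have : φ = fun q => e (![Real.exp (q 0) * Real.sin (q 2), Real.exp (q 0) * Real.cos (q 2)]) := by
      funext q; rw [hφ q]; rfl
    rw [this]
    exact (e.toContinuousLinearMap.hasFDerivAt).comp p hg
  have hfd : fderiv ℝ φ p = (e.toContinuousLinearMap).comp Lpi := hφ2.fderiv
  rw [LinearMap.mem_ker, hfd, ContinuousLinearMap.coe_coe]
  have hEpos : E ≠ 0 := Real.exp_ne_zero _
  constructor
  · intro h
    have hz : Lpi v = 0 := by
      have := congrArg e.symm h
      simpa using this
    have hc0 : L0 v = 0 := congrFun hz 0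
    have hc1 : L1 v = 0 := congrFun hz 1
    simp only [hL0, hL1, ContinuousLinearMap.add_apply, ContinuousLinearMap.smul_apply] at hc0 hc1
    have e0 : E * (c * v 2) + s * (E * v 0) = 0 := by simpa using hc0
    have e1 : E * (-s * v 2) + c * (E * v 0) = 0 := by simpa using hc1
    have eq1 : c * v 2 + s * v 0 = 0 := mul_left_cancel₀ hEpos (by linear_combination e0)
    have eq2 : -s * v 2 + c * v 0 = 0 := mul_left_cancel₀ hEpos (by linear_combination e1)
    have pyth : s ^ 2 + c ^ 2 = 1 := Real.sin_sq_add_cos_sq (p 2)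
    constructor
    · linear_combination s * eq1 + c * eq2 - v 0 * pyth
    · linear_combination c * eq1 - s * eq2 - v 2 * pyth
  · rintro ⟨hv0, hv2⟩
    have hz : Lpi v = 0 := by
      funext i
      fin_cases i
      · show L0 v = 0
        simp [hL0, hv0, hv2]
      · show L1 v = 0
        simp [hL1, hv0, hv2]
    rw [ContinuousLinearMap.comp_apply, hz, map_zero]

theorem stmt11.Jcomp (J : EuclideanSpace ℝ (Fin 8) →ₗ[ℝ] EuclideanSpace ℝ (Fin 8))
    (h1 : J (EuclideanSpace.single 0 1) = (Real.sqrt 2)⁻¹ •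
      (-(EuclideanSpace.single 2 1) - EuclideanSpace.single 1 (1:ℝ)))
    (h2 : J (EuclideanSpace.single 1 1) = (Real.sqrt 2)⁻¹ •
      (-(EuclideanSpace.single 3 1) + EuclideanSpace.single 0 (1:ℝ)))
    (h3 : J (EuclideanSpace.single 2 1) = (Real.sqrt 2)⁻¹ •
      (EuclideanSpace.single 0 1 + EuclideanSpace.single 3 (1:ℝ)))
    (h4 : J (EuclideanSpace.single 3 1) = (Real.sqrt 2)⁻¹ •
      (EuclideanSpace.single 1 1 - EuclideanSpace.single 2 (1:ℝ)))
    (h5 : J (EuclideanSpace.single 4 1) = (Real.sqrt 2)⁻¹ •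
      (-(EuclideanSpace.single 6 1) - EuclideanSpace.single 5 (1:ℝ)))
    (h6 : J (EuclideanSpace.single 5 1) = (Real.sqrt 2)⁻¹ •
      (-(EuclideanSpace.single 7 1) + EuclideanSpace.single 4 (1:ℝ)))
    (h7 : J (EuclideanSpace.single 6 1) = (Real.sqrt 2)⁻¹ •
      (EuclideanSpace.single 4 1 + EuclideanSpace.single 7 (1:ℝ)))
    (h8 : J (EuclideanSpace.single 7 1) = (Real.sqrt 2)⁻¹ •
      (EuclideanSpace.single 5 1 - EuclideanSpace.single 6 (1:ℝ)))
    (w : EuclideanSpace ℝ (Fin 8)) :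
    (J w) 0 = (Real.sqrt 2)⁻¹ * (w 1 + w 2) ∧
    (J w) 1 = (Real.sqrt 2)⁻¹ * (w 3 - w 0) ∧
    (J w) 2 = (Real.sqrt 2)⁻¹ * (-(w 0) - w 3) ∧
    (J w) 3 = (Real.sqrt 2)⁻¹ * (w 2 - w 1) ∧
    (J w) 4 = (Real.sqrt 2)⁻¹ * (w 5 + w 6) ∧
    (J w) 5 = (Real.sqrt 2)⁻¹ * (w 7 - w 4) ∧
    (J w) 6 = (Real.sqrt 2)⁻¹ * (-(w 4) - w 7) ∧
    (J w) 7 = (Real.sqrt 2)⁻¹ * (w 6 - w 5) := by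
  have hdec : w = ∑ i : Fin 8, w i • EuclideanSpace.single i (1:ℝ) := by
    ext j
    rw [WithLp.ofLp_sum, Finset.sum_apply j Finset.univ _]
    simp [EuclideanSpace.single_apply]
  have hJw : J w = ∑ i : Fin 8, w i • J (EuclideanSpace.single i (1:ℝ)) := by
    conv_lhs => rw [hdec]
    rw [map_sum]
    simp only [map_smul]
  rw [Fin.sum_univ_eight] at hJw
  simp only [h1, h2, h3, h4, h5, h6, h7, h8] at hJw
  refine ⟨?_, ?_, ?_, ?_, ?_, ?_, ?_, ?_⟩ <;>
    rw [hJw] <;>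
    simp [EuclideanSpace.single_apply, PiLp.add_apply, PiLp.smul_apply, PiLp.sub_apply,
      PiLp.neg_apply] <;> ring

/-- The subspace of vectors whose first four coordinates vanish. -/
def stmt11.K4 : Submodule ℝ (EuclideanSpace ℝ (Fin 8)) where
  carrier := {v | v 0 = 0 ∧ v 1 = 0 ∧ v 2 = 0 ∧ v 3 = 0}
  add_mem' := by
    rintro a b ⟨a0, a1, a2, a3⟩ ⟨b0, b1, b2, b3⟩
    refine ⟨?_, ?_, ?_, ?_⟩ <;> simp [PiLp.add_apply, a0, a1, a2, a3, b0, b1, b2, b3]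
  zero_mem' := ⟨rfl, rfl, rfl, rfl⟩
  smul_mem' := by
    rintro c a ⟨a0, a1, a2, a3⟩
    refine ⟨?_, ?_, ?_, ?_⟩ <;> simp [PiLp.smul_apply, a0, a1, a2, a3]

open stmt11 in
theorem stmt11.span_eq_K4 :
    Submodule.span ℝ
      ({EuclideanSpace.single 4 1, EuclideanSpace.single 5 1,
        EuclideanSpace.single 6 1, EuclideanSpace.single 7 1} :
        Set (EuclideanSpace ℝ (Fin 8))) = K4 := by
  apply le_antisymm
  · rw [Submodule.span_le]
    rintro x (rfl | rfl | rfl | rfl) <;>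
      exact ⟨by simp [EuclideanSpace.single_apply], by simp [EuclideanSpace.single_apply],
        by simp [EuclideanSpace.single_apply], by simp [EuclideanSpace.single_apply]⟩
  · rintro v ⟨v0, v1, v2, v3⟩
    have hv : v = v 4 • EuclideanSpace.single 4 (1:ℝ) + v 5 • EuclideanSpace.single 5 (1:ℝ)
        + v 6 • EuclideanSpace.single 6 (1:ℝ) + v 7 • EuclideanSpace.single 7 (1:ℝ) := by
      ext j
      fin_cases j <;>
        simp [PiLp.add_apply, PiLp.smul_apply, EuclideanSpace.single_apply, v0, v1, v2, v3]
    rw [hv]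
    have m4 : (EuclideanSpace.single 4 (1:ℝ) : EuclideanSpace ℝ (Fin 8)) ∈
        ({EuclideanSpace.single 4 1, EuclideanSpace.single 5 1,
          EuclideanSpace.single 6 1, EuclideanSpace.single 7 1} :
          Set (EuclideanSpace ℝ (Fin 8))) := by simp
    have m5 : (EuclideanSpace.single 5 (1:ℝ) : EuclideanSpace ℝ (Fin 8)) ∈
        ({EuclideanSpace.single 4 1, EuclideanSpace.single 5 1,
          EuclideanSpace.single 6 1, EuclideanSpace.single 7 1} :
          Set (EuclideanSpace ℝ (Fin 8))) := by simp
    have m6 : (EuclideanSpace.single 6 (1:ℝ) : EuclideanSpace ℝ (Fin 8)) ∈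
        ({EuclideanSpace.single 4 1, EuclideanSpace.single 5 1,
          EuclideanSpace.single 6 1, EuclideanSpace.single 7 1} :
          Set (EuclideanSpace ℝ (Fin 8))) := by simp
    have m7 : (EuclideanSpace.single 7 (1:ℝ) : EuclideanSpace ℝ (Fin 8)) ∈
        ({EuclideanSpace.single 4 1, EuclideanSpace.single 5 1,
          EuclideanSpace.single 6 1, EuclideanSpace.single 7 1} :
          Set (EuclideanSpace ℝ (Fin 8))) := by simp
    exact Submodule.add_mem _ (Submodule.add_mem _ (Submodule.add_mem _
      (Submodule.smul_mem _ _ (Submodule.subset_span m4))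
      (Submodule.smul_mem _ _ (Submodule.subset_span m5)))
      (Submodule.smul_mem _ _ (Submodule.subset_span m6)))
      (Submodule.smul_mem _ _ (Submodule.subset_span m7))

open stmt11 in
theorem stmt11.finrank_span4 :
    Module.finrank ℝ (Submodule.span ℝ
      ({EuclideanSpace.single 4 1, EuclideanSpace.single 5 1,
        EuclideanSpace.single 6 1, EuclideanSpace.single 7 1} :
        Set (EuclideanSpace ℝ (Fin 8)))) = 4 := by
  set f : Fin 4 → EuclideanSpace ℝ (Fin 8) :=
    ![EuclideanSpace.single 4 1, EuclideanSpace.single 5 1,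
      EuclideanSpace.single 6 1, EuclideanSpace.single 7 1] with hf
  have hrange : Set.range f =
      ({EuclideanSpace.single 4 1, EuclideanSpace.single 5 1,
        EuclideanSpace.single 6 1, EuclideanSpace.single 7 1} :
        Set (EuclideanSpace ℝ (Fin 8))) := by
    ext x
    constructor
    · rintro ⟨i, rfl⟩; fin_cases i <;> simp [hf]
    · rintro (rfl | rfl | rfl | rfl)
      exacts [⟨0, rfl⟩, ⟨1, rfl⟩, ⟨2, rfl⟩, ⟨3, rfl⟩]
  have hcomp : f = (EuclideanSpace.basisFun (Fin 8) ℝ).toBasis ∘ (![4, 5, 6, 7] : Fin 4 → Fin 8) := by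
    funext i
    fin_cases i <;> simp [hf, EuclideanSpace.basisFun_apply]
  have hinj : Function.Injective (![4, 5, 6, 7] : Fin 4 → Fin 8) := by decide
  have hli : LinearIndependent ℝ f := by
    rw [hcomp]
    exact (EuclideanSpace.basisFun (Fin 8) ℝ).toBasis.linearIndependent.comp _ hinj
  rw [← hrange, finrank_span_eq_card hli, Fintype.card_fin]

open stmt11 in
theorem stmt11.exists_preimage (J : EuclideanSpace ℝ (Fin 8) →ₗ[ℝ] EuclideanSpace ℝ (Fin 8))
    (h1 : J (EuclideanSpace.single 0 1) = (Real.sqrt 2)⁻¹ •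
      (-(EuclideanSpace.single 2 1) - EuclideanSpace.single 1 (1:ℝ)))
    (h2 : J (EuclideanSpace.single 1 1) = (Real.sqrt 2)⁻¹ •
      (-(EuclideanSpace.single 3 1) + EuclideanSpace.single 0 (1:ℝ)))
    (h3 : J (EuclideanSpace.single 2 1) = (Real.sqrt 2)⁻¹ •
      (EuclideanSpace.single 0 1 + EuclideanSpace.single 3 (1:ℝ)))
    (h4 : J (EuclideanSpace.single 3 1) = (Real.sqrt 2)⁻¹ •
      (EuclideanSpace.single 1 1 - EuclideanSpace.single 2 (1:ℝ)))
    (h5 : J (EuclideanSpace.single 4 1) = (Real.sqrt 2)⁻¹ •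
      (-(EuclideanSpace.single 6 1) - EuclideanSpace.single 5 (1:ℝ)))
    (h6 : J (EuclideanSpace.single 5 1) = (Real.sqrt 2)⁻¹ •
      (-(EuclideanSpace.single 7 1) + EuclideanSpace.single 4 (1:ℝ)))
    (h7 : J (EuclideanSpace.single 6 1) = (Real.sqrt 2)⁻¹ •
      (EuclideanSpace.single 4 1 + EuclideanSpace.single 7 (1:ℝ)))
    (h8 : J (EuclideanSpace.single 7 1) = (Real.sqrt 2)⁻¹ •
      (EuclideanSpace.single 5 1 - EuclideanSpace.single 6 (1:ℝ)))
    (v : EuclideanSpace ℝ (Fin 8)) (hv : v ∈ K4) : ∃ w ∈ K4, J w = v := by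
  obtain ⟨v0, v1, v2, v3⟩ := hv
  have hsq : Real.sqrt 2 * Real.sqrt 2 = 2 := Real.mul_self_sqrt (by norm_num)
  have hs0 : Real.sqrt 2 ≠ 0 := by positivity
  set w : EuclideanSpace ℝ (Fin 8) := (WithLp.equiv 2 (Fin 8 → ℝ)).symm
    ![0, 0, 0, 0, -((Real.sqrt 2)⁻¹ * (v 5 + v 6)), (Real.sqrt 2)⁻¹ * (v 4 - v 7),
      (Real.sqrt 2)⁻¹ * (v 4 + v 7), (Real.sqrt 2)⁻¹ * (v 5 - v 6)] with hw
  have w0 : w 0 = 0 := rfl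
  have w1 : w 1 = 0 := rfl
  have w2 : w 2 = 0 := rfl
  have w3 : w 3 = 0 := rfl
  have w4 : w 4 = -((Real.sqrt 2)⁻¹ * (v 5 + v 6)) := rfl
  have w5 : w 5 = (Real.sqrt 2)⁻¹ * (v 4 - v 7) := rfl
  have w6 : w 6 = (Real.sqrt 2)⁻¹ * (v 4 + v 7) := rfl
  have w7 : w 7 = (Real.sqrt 2)⁻¹ * (v 5 - v 6) := rfl
  obtain ⟨c0, c1, c2, c3, c4, c5, c6, c7⟩ := Jcomp J h1 h2 h3 h4 h5 h6 h7 h8 w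
  refine ⟨w, ⟨w0, w1, w2, w3⟩, ?_⟩
  ext j
  fin_cases j
  · show J w 0 = v 0
    rw [c0, w1, w2, v0]; ring
  · show J w 1 = v 1
    rw [c1, w3, w0, v1]; ring
  · show J w 2 = v 2
    rw [c2, w0, w3, v2]; ring
  · show J w 3 = v 3
    rw [c3, w2, w1, v3]; ring
  · show J w 4 = v 4
    rw [c4, w5, w6]; field_simp
    rw [Real.sq_sqrt (by norm_num : (0:ℝ) ≤ 2)]; ring
  · show J w 5 = v 5
    rw [c5, w7, w4]; field_simp; try ring_nf
    rw [Real.sq_sqrt (by norm_num : (0:ℝ) ≤ 2)]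
  · show J w 6 = v 6
    rw [c6, w4, w7]; field_simp
    rw [Real.sq_sqrt (by norm_num : (0:ℝ) ≤ 2)]; ring
  · show J w 7 = v 7
    rw [c7, w6, w5]; field_simp
    rw [Real.sq_sqrt (by norm_num : (0:ℝ) ≤ 2)]; ring

/-- For the map `φ(u) = (e^{u₁} sin u₃, e^{u₁} cos u₃)` and the
almost complex structure `J` on `ℝ⁸` given on the standard basis (0-indexed)
by the stated formulas, at every point the subspace
`D = ker dφ ⊓ J(ker dφ)` equals `span{e₅, e₆, e₇, e₈}`, is 4-dimensional and
`J`-invariant. -/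
theorem stmt_11 (φ : EuclideanSpace ℝ (Fin 8) → EuclideanSpace ℝ (Fin 2))
    (hφ : ∀ p, φ p = (WithLp.equiv 2 (Fin 2 → ℝ)).symm
      ![Real.exp (p 0) * Real.sin (p 2), Real.exp (p 0) * Real.cos (p 2)])
    (J : EuclideanSpace ℝ (Fin 8) →ₗ[ℝ] EuclideanSpace ℝ (Fin 8))
    (h1 : J (EuclideanSpace.single 0 1) = (Real.sqrt 2)⁻¹ •
      (-(EuclideanSpace.single 2 1) - EuclideanSpace.single 1 (1:ℝ)))
    (h2 : J (EuclideanSpace.single 1 1) = (Real.sqrt 2)⁻¹ •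
      (-(EuclideanSpace.single 3 1) + EuclideanSpace.single 0 (1:ℝ)))
    (h3 : J (EuclideanSpace.single 2 1) = (Real.sqrt 2)⁻¹ •
      (EuclideanSpace.single 0 1 + EuclideanSpace.single 3 (1:ℝ)))
    (h4 : J (EuclideanSpace.single 3 1) = (Real.sqrt 2)⁻¹ •
      (EuclideanSpace.single 1 1 - EuclideanSpace.single 2 (1:ℝ)))
    (h5 : J (EuclideanSpace.single 4 1) = (Real.sqrt 2)⁻¹ •
      (-(EuclideanSpace.single 6 1) - EuclideanSpace.single 5 (1:ℝ)))
    (h6 : J (EuclideanSpace.single 5 1) = (Real.sqrt 2)⁻¹ •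
      (-(EuclideanSpace.single 7 1) + EuclideanSpace.single 4 (1:ℝ)))
    (h7 : J (EuclideanSpace.single 6 1) = (Real.sqrt 2)⁻¹ •
      (EuclideanSpace.single 4 1 + EuclideanSpace.single 7 (1:ℝ)))
    (h8 : J (EuclideanSpace.single 7 1) = (Real.sqrt 2)⁻¹ •
      (EuclideanSpace.single 5 1 - EuclideanSpace.single 6 (1:ℝ))) :
    ∀ p : EuclideanSpace ℝ (Fin 8),
      LinearMap.ker (fderiv ℝ φ p : EuclideanSpace ℝ (Fin 8) →ₗ[ℝ] EuclideanSpace ℝ (Fin 2)) ⊓ (LinearMap.ker (fderiv ℝ φ p : EuclideanSpace ℝ (Fin 8) →ₗ[ℝ] EuclideanSpace ℝ (Fin 2))).map J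
        = Submodule.span ℝ
          ({EuclideanSpace.single 4 1, EuclideanSpace.single 5 1,
            EuclideanSpace.single 6 1, EuclideanSpace.single 7 1} :
            Set (EuclideanSpace ℝ (Fin 8))) ∧
      Module.finrank ℝ
        ↥(LinearMap.ker (fderiv ℝ φ p : EuclideanSpace ℝ (Fin 8) →ₗ[ℝ] EuclideanSpace ℝ (Fin 2)) ⊓ (LinearMap.ker (fderiv ℝ φ p : EuclideanSpace ℝ (Fin 8) →ₗ[ℝ] EuclideanSpace ℝ (Fin 2))).map J) = 4 ∧
      (LinearMap.ker (fderiv ℝ φ p : EuclideanSpace ℝ (Fin 8) →ₗ[ℝ] EuclideanSpace ℝ (Fin 2)) ⊓ (LinearMap.ker (fderiv ℝ φ p : EuclideanSpace ℝ (Fin 8) →ₗ[ℝ] EuclideanSpace ℝ (Fin 2))).map J).map J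
        = LinearMap.ker (fderiv ℝ φ p : EuclideanSpace ℝ (Fin 8) →ₗ[ℝ] EuclideanSpace ℝ (Fin 2)) ⊓ (LinearMap.ker (fderiv ℝ φ p : EuclideanSpace ℝ (Fin 8) →ₗ[ℝ] EuclideanSpace ℝ (Fin 2))).map J := by
  intro p
  have hs0 : ((Real.sqrt 2)⁻¹ : ℝ) ≠ 0 := inv_ne_zero (by positivity)
  have hker := stmt11.ker_fderiv_mem φ hφ p
  -- D = K4
  have hD : LinearMap.ker (fderiv ℝ φ p : EuclideanSpace ℝ (Fin 8) →ₗ[ℝ] EuclideanSpace ℝ (Fin 2)) ⊓ (LinearMap.ker (fderiv ℝ φ p : EuclideanSpace ℝ (Fin 8) →ₗ[ℝ] EuclideanSpace ℝ (Fin 2))).map J = stmt11.K4 := by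
    apply le_antisymm
    · rintro v ⟨hv1, hv2⟩
      obtain ⟨w, hw, rfl⟩ := Submodule.mem_map.1 hv2
      obtain ⟨w0, w2⟩ := (hker w).1 hw
      obtain ⟨c0, c1, c2, c3, _, _, _, _⟩ := stmt11.Jcomp J h1 h2 h3 h4 h5 h6 h7 h8 w
      obtain ⟨jw0, jw2⟩ := (hker _).1 hv1
      have hw1 : w 1 = 0 := by
        rw [c0, w2] at jw0
        have := mul_eq_zero.1 jw0
        rcases this with h | h
        · exact absurd h hs0
        · linarith
      have hw3 : w 3 = 0 := by
        rw [c2, w0] at jw2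
        rcases mul_eq_zero.1 jw2 with h | h
        · exact absurd h hs0
        · linarith
      exact ⟨by rw [c0, hw1, w2]; ring, by rw [c1, hw3, w0]; ring,
        by rw [c2, w0, hw3]; ring, by rw [c3, w2, hw1]; ring⟩
    · intro v hv
      obtain ⟨w, hwK, rfl⟩ := stmt11.exists_preimage J h1 h2 h3 h4 h5 h6 h7 h8 v hv
      obtain ⟨v0, v1, v2, v3⟩ := hv
      refine ⟨(hker _).2 ⟨v0, v2⟩, Submodule.mem_map.2 ⟨w, ?_, rfl⟩⟩
      exact (hker w).2 ⟨hwK.1, hwK.2.2.1⟩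
  refine ⟨by rw [hD, stmt11.span_eq_K4], ?_, ?_⟩
  · rw [hD, ← stmt11.span_eq_K4]
    exact stmt11.finrank_span4
  · rw [hD]
    apply le_antisymm
    · rintro v hv
      obtain ⟨w, hw, rfl⟩ := Submodule.mem_map.1 hv
      obtain ⟨w0, w1, w2, w3⟩ := hw
      obtain ⟨c0, c1, c2, c3, _, _, _, _⟩ := stmt11.Jcomp J h1 h2 h3 h4 h5 h6 h7 h8 w
      exact ⟨by rw [c0, w1, w2]; ring, by rw [c1, w3, w0]; ring,
        by rw [c2, w0, w3]; ring, by rw [c3, w2, w1]; ring⟩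
    · intro v hv
      obtain ⟨w, hwK, rfl⟩ := stmt11.exists_preimage J h1 h2 h3 h4 h5 h6 h7 h8 v hv
      exact Submodule.mem_map.2 ⟨w, hwK, rfl⟩
end
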